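/- Let $Y$ be a positive random variable whose law has continuous density $e^{-\psi}$ on $(0,\infty)$, and suppose there exist $y_0 > 0$, $\alpha \geq 1$, $\beta \geq 1$ such that (i) $y_0\psi'(y_0 y) \geq \beta y$ for all $y \geq \beta$, (ii) $y_0\psi'(y_0 y) \leq -\beta y^{-3}$ for all $0 < y \leq \beta^{-1}$, and (iii) $|y_0^2\psi''(y_0 y)| \leq \alpha(1+y^{-4})$ for all $y > 0$. Then there is a universal constant $c > 0$ such that $\mathrm{Var}(\log Y) \geq c\,\alpha^{-1}\beta^{-6}$. -/

import Mathlib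

open MeasureTheory ProbabilityTheory Set
open scoped ENNReal NNReal

set_option maxHeartbeats 1000000

private lemma var_core (ψ : ℝ → ℝ) (y₀ α β : ℝ)
    (hψ : ContDiffOn ℝ 2 ψ (Ioi 0))
    (hy₀ : 0 < y₀) (hα : 1 ≤ α) (hβ : 1 ≤ β)
    (h1 : ∀ y : ℝ, β ≤ y → β * y ≤ y₀ * deriv ψ (y₀ * y))
    (h2 : ∀ y : ℝ, 0 < y → y ≤ β⁻¹ → y₀ * deriv ψ (y₀ * y) ≤ -(β * y⁻¹ ^ 3))
    (h3 : ∀ y : ℝ, 0 < y → |y₀ ^ 2 * deriv (deriv ψ) (y₀ * y)| ≤ α * (1 + y⁻¹ ^ 4))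
    (hInt : IntegrableOn (fun y => Real.exp (-ψ y)) (Ioi 0))
    (hTot : ∫ y in Ioi 0, Real.exp (-ψ y) = 1) :
    ∃ D : ℝ, 0 < D ∧ D ^ 2 ≤ 2 * α * β ^ 6 ∧
      (∀ y : ℝ, 0 < y → y * Real.exp (-ψ y) ≤ D) ∧
      IntegrableOn (fun y => (Real.log y) ^ 2 * Real.exp (-ψ y)) (Ioi 0) := by
  have hβ0 : 0 < β := lt_of_lt_of_le one_pos hβ
  have hα0 : 0 < α := lt_of_lt_of_le one_pos hα
  -- β > 1
  have hβ1 : 1 < β := by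
    rcases lt_or_eq_of_le hβ with h | h
    · exact h
    · exfalso
      have e1 := h1 β le_rfl
      have e2 := h2 β⁻¹ (by positivity) le_rfl
      rw [← h] at e1 e2
      simp only [inv_one, mul_one] at e1 e2
      norm_num at e1 e2
      linarith
  set a : ℝ := y₀ / β with ha_def
  set b : ℝ := y₀ * β with hb_def
  have ha0 : 0 < a := by positivity
  have hb0 : 0 < b := by positivity
  have hab : a < b := by
    rw [ha_def, hb_def, div_lt_iff₀ hβ0]
    nlinarith
  set K : ℝ := α * (1 + β ^ 4) / y₀ ^ 2 with hK_def
  have hK0 : 0 < K := by positivity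
  -- translated hypotheses
  have H1 : ∀ y : ℝ, b ≤ y → β * y / y₀ ^ 2 ≤ deriv ψ y := by
    intro y hy
    have hy0 : 0 < y := lt_of_lt_of_le hb0 hy
    have hu : β ≤ y / y₀ := by rw [le_div_iff₀ hy₀]; rw [hb_def] at hy; linarith
    have := h1 (y / y₀) hu
    rw [mul_div_cancel₀ _ (ne_of_gt hy₀)] at this
    rw [div_le_iff₀ (by positivity : (0:ℝ) < y₀ ^ 2)]
    calc β * y = β * (y / y₀) * y₀ := by field_simp
    _ ≤ y₀ * deriv ψ y * y₀ := by nlinarith [this]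
    _ = deriv ψ y * y₀ ^ 2 := by ring
  have H2 : ∀ y : ℝ, 0 < y → y ≤ a → deriv ψ y ≤ -(β * y₀ ^ 2 / y ^ 3) := by
    intro y hy0 hy
    have hu0 : 0 < y / y₀ := by positivity
    have hy' : y ≤ y₀ / β := hy
    have hu : y / y₀ ≤ β⁻¹ := by
      rw [div_le_iff₀ hy₀, inv_mul_eq_div, le_div_iff₀ hβ0]
      rw [le_div_iff₀ hβ0] at hy'
      linarith
    have hthis := h2 (y / y₀) hu0 hu
    rw [mul_div_cancel₀ _ (ne_of_gt hy₀)] at hthis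
    have hinv : (y / y₀)⁻¹ = y₀ / y := by
      rw [inv_div]
    rw [hinv] at hthis
    have h' : y₀ * deriv ψ y ≤ y₀ * (-(β * y₀ ^ 2 / y ^ 3)) := by
      refine hthis.trans_eq ?_
      field_simp
    exact le_of_mul_le_mul_left h' hy₀
  have H3 : ∀ w : ℝ, a ≤ w → |deriv (deriv ψ) w| ≤ K := by
    intro w hw
    have hw0 : 0 < w := lt_of_lt_of_le ha0 hw
    have hu0 : 0 < w / y₀ := by positivity
    have := h3 (w / y₀) hu0
    rw [mul_div_cancel₀ _ (ne_of_gt hy₀)] at this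
    have hinv : (w / y₀)⁻¹ = y₀ / w := by field_simp
    rw [hinv] at this
    have hbd : (y₀ / w) ^ 4 ≤ β ^ 4 := by
      apply pow_le_pow_left₀ (by positivity)
      rw [div_le_iff₀ hw0, ha_def] at *
      calc y₀ = (y₀ / β) * β := by field_simp
      _ ≤ w * β := by nlinarith
      _ = β * w := mul_comm _ _
    have h4 : |deriv (deriv ψ) w| * y₀ ^ 2 ≤ α * (1 + β ^ 4) := by
      calc |deriv (deriv ψ) w| * y₀ ^ 2 = |y₀ ^ 2 * deriv (deriv ψ) w| := by
            rw [abs_mul, abs_of_nonneg (by positivity : (0:ℝ) ≤ y₀ ^ 2)]; ring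
      _ ≤ α * (1 + (y₀ / w) ^ 4) := this
      _ ≤ α * (1 + β ^ 4) := by nlinarith
    rw [hK_def, le_div_iff₀ (by positivity : (0:ℝ) < y₀ ^ 2)]
    exact h4
  -- smoothness facts
  have hopen : IsOpen (Ioi (0:ℝ)) := isOpen_Ioi
  have hψc : ContinuousOn ψ (Ioi 0) := hψ.continuousOn
  have hψ'CD : ContDiffOn ℝ 1 (deriv ψ) (Ioi 0) := hψ.deriv_of_isOpen hopen (by norm_num)
  have hψ'c : ContinuousOn (deriv ψ) (Ioi 0) := hψ'CD.continuousOn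
  have hψd : ∀ y : ℝ, 0 < y → HasDerivAt ψ (deriv ψ y) y := fun y hy =>
    ((hψ.differentiableOn (by norm_num)).differentiableAt (hopen.mem_nhds hy)).hasDerivAt
  have hψ'd : ∀ y : ℝ, 0 < y → HasDerivAt (deriv ψ) (deriv (deriv ψ) y) y := fun y hy =>
    ((hψ'CD.differentiableOn (by norm_num)).differentiableAt (hopen.mem_nhds hy)).hasDerivAt
  -- minimizer of ψ on [a/2, 2b]
  obtain ⟨ystar, hymem, hymin⟩ :=
    isCompact_Icc.exists_isMinOn (s := Icc (a/2) (2*b)) (nonempty_Icc.2 (by linarith))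
      (hψc.mono (fun x hx => mem_Ioi.2 (lt_of_lt_of_le (by positivity) hx.1)))
  have hmin : ∀ y ∈ Icc (a/2) (2*b), ψ ystar ≤ ψ y := fun y hy => isMinOn_iff.1 hymin y hy
  have hanti2 : StrictAntiOn ψ (Icc (a/2) a) := by
    apply strictAntiOn_of_deriv_neg (convex_Icc _ _)
      (hψc.mono (fun x hx => mem_Ioi.2 (lt_of_lt_of_le (by positivity) hx.1)))
    intro x hx
    rw [interior_Icc] at hx
    have hx0 : 0 < x := lt_trans (by positivity) hx.1
    have h' := H2 x hx0 hx.2.le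
    have hpos : 0 < β * y₀ ^ 2 / x ^ 3 := by positivity
    linarith
  have hmono2 : StrictMonoOn ψ (Icc b (2*b)) := by
    apply strictMonoOn_of_deriv_pos (convex_Icc _ _)
      (hψc.mono (fun x hx => mem_Ioi.2 (lt_of_lt_of_le hb0 hx.1)))
    intro x hx
    rw [interior_Icc] at hx
    have h' := H1 x hx.1.le
    have hx0 : 0 < x := lt_trans hb0 hx.1
    have hpos : 0 < β * x / y₀ ^ 2 := by positivity
    linarith
  have hne1 : ystar ≠ a/2 := by
    intro h
    have h1' : ψ a < ψ (a/2) := hanti2 ⟨le_refl _, by linarith⟩ ⟨by linarith, le_refl a⟩ (by linarith)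
    have h2' : ψ ystar ≤ ψ a := hmin a ⟨by linarith, by linarith⟩
    rw [h] at h2'; linarith
  have hne2 : ystar ≠ 2*b := by
    intro h
    have h1' : ψ b < ψ (2*b) := hmono2 ⟨le_refl _, by linarith⟩ ⟨by linarith, le_refl _⟩ (by linarith)
    have h2' : ψ ystar ≤ ψ b := hmin b ⟨by linarith, by linarith⟩
    rw [h] at h2'; linarith
  have hyIoo : ystar ∈ Ioo (a/2) (2*b) := by
    rcases hymem with ⟨hl, hr⟩
    exact ⟨lt_of_le_of_ne hl (Ne.symm hne1), lt_of_le_of_ne hr hne2⟩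
  have hy0 : 0 < ystar := lt_trans (by positivity) hyIoo.1
  have hcrit : deriv ψ ystar = 0 :=
    (hymin.isLocalMin (Icc_mem_nhds hyIoo.1 hyIoo.2)).deriv_eq_zero
  have hyab : ystar ∈ Icc a b := by
    constructor
    · by_contra h
      push_neg at h
      have := H2 ystar hy0 h.le
      have hpos : 0 < β * y₀ ^ 2 / ystar ^ 3 := by positivity
      rw [hcrit] at this; linarith
    · by_contra h
      push_neg at h
      have := H1 ystar h.le
      have hpos : 0 < β * ystar / y₀ ^ 2 := by positivity
      rw [hcrit] at this; linarith
  -- monotonicity on tails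
  have hantiIoc : AntitoneOn ψ (Ioc 0 a) := by
    apply antitoneOn_of_deriv_nonpos (convex_Ioc _ _)
      (hψc.mono (fun x hx => mem_Ioi.2 hx.1))
    · intro x hx
      rw [interior_Ioc] at hx
      exact ((hψd x hx.1).differentiableAt).differentiableWithinAt
    · intro x hx
      rw [interior_Ioc] at hx
      have hx0 : 0 < x := hx.1
      have h' := H2 x hx.1 hx.2.le
      have hpos : 0 < β * y₀ ^ 2 / x ^ 3 := by positivity
      linarith
  have hmonoIci : MonotoneOn ψ (Ici b) := by
    apply monotoneOn_of_deriv_nonneg (convex_Ici _)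
      (hψc.mono (fun x hx => mem_Ioi.2 (lt_of_lt_of_le hb0 hx)))
    · intro x hx
      rw [interior_Ici] at hx
      exact ((hψd x (lt_trans hb0 hx)).differentiableAt).differentiableWithinAt
    · intro x hx
      rw [interior_Ici] at hx
      have h' := H1 x hx.le
      have hx0 : 0 < x := lt_trans hb0 hx
      have hpos : 0 < β * x / y₀ ^ 2 := by positivity
      linarith
  have hGmin : ∀ y : ℝ, 0 < y → ψ ystar ≤ ψ y := by
    intro y hy
    rcases le_total y a with h | h
    · have h1' : ψ a ≤ ψ y := hantiIoc ⟨hy, h⟩ ⟨ha0, le_refl a⟩ h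
      have h2' : ψ ystar ≤ ψ a := hmin a ⟨by linarith, by linarith⟩
      linarith
    · rcases le_total y (2*b) with h' | h'
      · exact hmin y ⟨by linarith, h'⟩
      · have h1' : ψ b ≤ ψ y := hmonoIci (mem_Ici.2 (le_refl b)) (mem_Ici.2 (by linarith)) (by linarith)
        have h2' : ψ ystar ≤ ψ b := hmin b ⟨by linarith, by linarith⟩
        linarith
  set M : ℝ := Real.exp (-ψ ystar) with hM_def
  have hM0 : 0 < M := Real.exp_pos _
  have hfM : ∀ y : ℝ, 0 < y → Real.exp (-ψ y) ≤ M := fun y hy =>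
    Real.exp_le_exp.2 (neg_le_neg (hGmin y hy))
  -- derivative upper bound to the right of ystar
  have hQ1 : ∀ w : ℝ, ystar ≤ w → deriv ψ w ≤ K * (w - ystar) := by
    intro w hw
    have haux : AntitoneOn (fun w => deriv ψ w - K * (w - ystar)) (Ici ystar) := by
      apply antitoneOn_of_deriv_nonpos (convex_Ici _)
        (ContinuousOn.sub (hψ'c.mono fun x hx => mem_Ioi.2 (lt_of_lt_of_le hy0 hx)) (by fun_prop))
      · intro x hx
        rw [interior_Ici] at hx
        have hx0 : 0 < x := lt_trans hy0 hx
        exact (((hψ'd x hx0).sub (((hasDerivAt_id' (𝕜 := ℝ) (x := x)).sub_const ystar).const_mul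
          K)).differentiableAt).differentiableWithinAt
      · intro x hx
        rw [interior_Ici] at hx
        have hx0 : 0 < x := lt_trans hy0 hx
        have hd : deriv (fun w => deriv ψ w - K * (w - ystar)) x = deriv (deriv ψ) x - K := by
          have hder := ((hψ'd x hx0).sub
            (((hasDerivAt_id' (𝕜 := ℝ) (x := x)).sub_const ystar).const_mul K)).deriv
          refine hder.trans ?_; ring
        refine hd.le.trans ?_
        have h3' := abs_le.1 (H3 x (le_trans hyab.1 hx.le))
        linarith [h3'.2]
    have hcomp := haux (mem_Ici.2 (le_refl ystar)) (mem_Ici.2 hw) hw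
    simp only [sub_self, mul_zero, sub_zero] at hcomp
    rw [hcrit] at hcomp
    linarith
  have hQ : ∀ w : ℝ, ystar ≤ w → ψ w ≤ ψ ystar + K/2 * (w - ystar)^2 := by
    intro w hw
    have haux : AntitoneOn (fun w => ψ w - K/2 * (w - ystar)^2) (Ici ystar) := by
      apply antitoneOn_of_deriv_nonpos (convex_Ici _)
        (ContinuousOn.sub (hψc.mono fun x hx => mem_Ioi.2 (lt_of_lt_of_le hy0 hx)) (by fun_prop))
      · intro x hx
        rw [interior_Ici] at hx
        have hx0 : 0 < x := lt_trans hy0 hx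
        exact ((hψd x hx0).sub ((((hasDerivAt_id' (𝕜 := ℝ) (x := x)).sub_const ystar).pow 2).const_mul
          (K/2))).differentiableAt.differentiableWithinAt
      · intro x hx
        rw [interior_Ici] at hx
        have hx0 : 0 < x := lt_trans hy0 hx
        have hd : deriv (fun w => ψ w - K/2 * (w - ystar)^2) x = deriv ψ x - K * (x - ystar) := by
          have hder := ((hψd x hx0).sub ((((hasDerivAt_id' (𝕜 := ℝ) (x := x)).sub_const ystar).pow
            2).const_mul (K/2))).deriv
          refine hder.trans ?_; ring
        refine hd.le.trans ?_
        linarith [hQ1 x hx.le]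
    have hcomp := haux (mem_Ici.2 (le_refl ystar)) (mem_Ici.2 hw) hw
    simp only [sub_self] at hcomp
    have hz : ((0:ℝ))^2 = 0 := by norm_num
    rw [hz, mul_zero, sub_zero] at hcomp
    linarith
  -- Gaussian lower bound gives M ≤ sqrt K
  have hMK : M ≤ Real.sqrt K := by
    have hK2 : (0:ℝ) < K/2 := by positivity
    have hgint : Integrable (fun w : ℝ => M * Real.exp (-(K/2) * (w - ystar)^2)) :=
      ((integrable_exp_neg_mul_sq hK2).comp_sub_right ystar).const_mul M
    have hlow : ∫ w in Ioi ystar, M * Real.exp (-(K/2) * (w - ystar)^2)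
        ≤ ∫ w in Ioi ystar, Real.exp (-ψ w) := by
      apply setIntegral_mono_on hgint.integrableOn
        (hInt.mono_set (fun x hx => mem_Ioi.2 (lt_trans hy0 hx))) measurableSet_Ioi
      intro x hx
      rw [hM_def, ← Real.exp_add]
      apply Real.exp_le_exp.2
      have := hQ x (le_of_lt hx)
      nlinarith [this]
    have hup : ∫ w in Ioi ystar, Real.exp (-ψ w) ≤ 1 := by
      rw [← hTot]
      apply setIntegral_mono_set hInt
      · filter_upwards with x using (Real.exp_pos _).le
      · exact HasSubset.Subset.eventuallyLE (fun x hx => mem_Ioi.2 (lt_trans hy0 hx))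
    have htrans : ∫ w in Ioi ystar, M * Real.exp (-(K/2) * (w - ystar)^2)
        = M * (Real.sqrt (Real.pi / (K/2)) / 2) := by
      rw [integral_const_mul]
      congr 1
      have hmp : MeasurePreserving (fun x : ℝ => x - ystar) volume volume :=
        measurePreserving_sub_right volume ystar
      have hemb : MeasurableEmbedding (fun x : ℝ => x - ystar) :=
        (MeasurableEquiv.subRight ystar).measurableEmbedding
      have hpre : (fun x : ℝ => x - ystar) ⁻¹' (Ioi 0) = Ioi ystar := by
        ext x; simp [mem_Ioi, sub_pos]
      have hchg := hmp.setIntegral_preimage_emb hemb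
        (fun x => Real.exp (-(K/2) * x^2)) (Ioi 0)
      rw [hpre] at hchg
      rw [hchg, integral_gaussian_Ioi]
    have hs0 : 0 < Real.sqrt (Real.pi / (K/2)) := Real.sqrt_pos.2 (by positivity)
    have hMs : M * Real.sqrt (Real.pi / (K/2)) ≤ 2 := by
      rw [htrans] at hlow
      linarith
    have hKs : 2 ≤ Real.sqrt K * Real.sqrt (Real.pi / (K/2)) := by
      rw [← Real.sqrt_mul hK0.le]
      have harg : K * (Real.pi / (K/2)) = 2 * Real.pi := by field_simp
      rw [harg]
      calc (2:ℝ) = Real.sqrt 4 := by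
            rw [show (4:ℝ) = 2^2 by norm_num, Real.sqrt_sq (by norm_num : (0:ℝ) ≤ 2)]
      _ ≤ Real.sqrt (2*Real.pi) := Real.sqrt_le_sqrt (by nlinarith [Real.pi_gt_three])
    exact le_of_mul_le_mul_right (hMs.trans hKs) hs0
  -- right tail bound
  have hR : ∀ y : ℝ, b ≤ y → ψ b + β * (y^2 - b^2) / (2*y₀^2) ≤ ψ y := by
    intro y hy
    have haux : MonotoneOn (fun y => ψ y - β * y^2 / (2*y₀^2)) (Ici b) := by
      apply monotoneOn_of_deriv_nonneg (convex_Ici _)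
        (ContinuousOn.sub (hψc.mono fun x hx => mem_Ioi.2 (lt_of_lt_of_le hb0 hx)) (by fun_prop))
      · intro x hx
        rw [interior_Ici] at hx
        have hx0 : 0 < x := lt_trans hb0 hx
        exact ((hψd x hx0).sub (((hasDerivAt_pow 2 x).const_mul β).div_const
          (2*y₀^2))).differentiableAt.differentiableWithinAt
      · intro x hx
        rw [interior_Ici] at hx
        have hx0 : 0 < x := lt_trans hb0 hx
        have hd : deriv (fun y => ψ y - β * y^2 / (2*y₀^2)) x = deriv ψ x - β * x / y₀^2 := by
          have hder := ((hψd x hx0).sub (((hasDerivAt_pow 2 x).const_mul β).div_const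
            (2*y₀^2))).deriv
          refine hder.trans ?_; field_simp; ring
        refine le_of_le_of_eq ?_ hd.symm
        linarith [H1 x hx.le]
    have hcomp := haux (mem_Ici.2 (le_refl b)) (mem_Ici.2 hy) hy
    have heq1 : β * (y^2 - b^2)/(2*y₀^2) = β * y^2/(2*y₀^2) - β * b^2/(2*y₀^2) := by ring
    simp only at hcomp
    linarith [hcomp]
  -- left tail bound
  have hL : ∀ y : ℝ, 0 < y → y ≤ a → ψ a + β * y₀^2 / 2 * (y⁻¹^2 - a⁻¹^2) ≤ ψ y := by
    intro y hy hya
    have haux : AntitoneOn (fun y => ψ y - β * y₀^2 / 2 * y⁻¹^2) (Ioc 0 a) := by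
      apply antitoneOn_of_deriv_nonpos (convex_Ioc _ _)
        (ContinuousOn.sub (hψc.mono fun x hx => mem_Ioi.2 hx.1)
          (continuousOn_const.mul ((continuousOn_inv₀.mono
            (fun x (hx : x ∈ Ioc 0 a) => (mem_compl_singleton_iff).2 (ne_of_gt hx.1))).pow 2)))
      · intro x hx
        rw [interior_Ioc] at hx
        have hx0 : 0 < x := hx.1
        exact ((hψd x hx0).sub (((hasDerivAt_inv (ne_of_gt hx0)).pow 2).const_mul
          (β * y₀^2 / 2))).differentiableAt.differentiableWithinAt
      · intro x hx
        rw [interior_Ioc] at hx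
        have hx0 : 0 < x := hx.1
        have hd : deriv (fun y => ψ y - β * y₀^2 / 2 * y⁻¹^2) x
            = deriv ψ x + β * y₀^2 / x^3 := by
          have hder := ((hψd x hx0).sub (((hasDerivAt_inv (ne_of_gt hx0)).pow 2).const_mul
            (β * y₀^2 / 2))).deriv
          refine hder.trans ?_; rw [show (2:ℕ) - 1 = 1 from rfl, pow_one]; field_simp; ring
        refine hd.le.trans ?_
        have h' := H2 x hx0 hx.2.le
        have heq2 : -(β * y₀ ^ 2 / x ^ 3) + β * y₀^2 / x^3 = 0 := by ring
        linarith
    have hcomp := haux ⟨hy, hya⟩ ⟨ha0, le_refl a⟩ hya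
    simp only at hcomp
    have heq3 : β * y₀^2 / 2 * (y⁻¹^2 - a⁻¹^2)
        = β * y₀^2 / 2 * y⁻¹^2 - β * y₀^2 / 2 * a⁻¹^2 := by ring
    linarith [hcomp]
  -- conclusion
  refine ⟨y₀ * β * M, by positivity, ?_, ?_, ?_⟩
  · -- D² ≤ 2αβ⁶
    have hM2 : M^2 ≤ K := by
      nlinarith [hMK, hM0.le, Real.sq_sqrt hK0.le, Real.sqrt_nonneg K]
    have hKy : K * y₀^2 = α * (1 + β^4) := by
      rw [hK_def]; field_simp
    have hβ2 : β^2 ≤ β^6 := pow_le_pow_right₀ hβ (by norm_num)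
    calc (y₀ * β * M)^2 = (M^2) * y₀^2 * β^2 := by ring
    _ ≤ K * y₀^2 * β^2 := mul_le_mul_of_nonneg_right (mul_le_mul_of_nonneg_right hM2 (sq_nonneg y₀)) (sq_nonneg β)
    _ = α * (1 + β^4) * β^2 := by rw [hKy]
    _ = α * β^2 + α * β^6 := by ring
    _ ≤ 2 * α * β^6 := by nlinarith [hα0, hβ2]
  · -- pointwise bound y * f y ≤ y₀ β M
    intro y hy
    rcases le_total y b with h | h
    · calc y * Real.exp (-ψ y) ≤ b * M :=
            mul_le_mul h (hfM y hy) (Real.exp_pos _).le hb0.le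
      _ = y₀ * β * M := by rw [hb_def]
    · set x : ℝ := (y^2 - b^2)/(2*y₀^2) with hx_def
      have hx0 : 0 ≤ x := by
        apply div_nonneg _ (by positivity)
        nlinarith [h, hb0]
      have hψy : ψ b + x ≤ ψ y := by
        have h1' := hR y h
        have h2' : x ≤ β * (y^2 - b^2) / (2*y₀^2) := by
          have hbx : x ≤ β * x := by nlinarith [hx0, hβ]
          have heqx : β * x = β * (y^2 - b^2) / (2*y₀^2) := by rw [hx_def]; ring
          linarith
        linarith
      have hfy : Real.exp (-ψ y) ≤ M * Real.exp (-x) := by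
        rw [hM_def, ← Real.exp_add]
        apply Real.exp_le_exp.2
        have hMb : ψ ystar ≤ ψ b := hmin b ⟨by linarith, by linarith⟩
        linarith
      have hbex : y ≤ b * Real.exp x := by
        have hexp := Real.add_one_le_exp x
        have hkey0 : y ≤ b * (1 + x) := by
          have hbb : 2*y₀^2 ≤ 2*b^2 := by
            rw [hb_def]
            nlinarith [mul_nonneg (mul_nonneg hy₀.le hy₀.le)
              (show (0:ℝ) ≤ β^2 - 1 by nlinarith [hβ1])]
          have hin : 2*y₀^2 ≤ b*(y+b) := by
            nlinarith [mul_le_mul_of_nonneg_left h hb0.le]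
          have hprod : 0 ≤ (y - b) * (b*(y+b) - 2*y₀^2) :=
            mul_nonneg (by linarith) (by linarith)
          have h2y : (0:ℝ) < 2*y₀^2 := by positivity
          rw [← sub_nonneg, hx_def]
          have hrw : b * (1 + (y^2 - b^2)/(2*y₀^2)) - y
              = ((y - b) * (b*(y+b) - 2*y₀^2)) / (2*y₀^2) := by
            field_simp
            ring
          rw [hrw]
          positivity
        calc y ≤ b * (1 + x) := hkey0
        _ ≤ b * Real.exp x := mul_le_mul_of_nonneg_left (by linarith) hb0.le
      calc y * Real.exp (-ψ y) ≤ y * (M * Real.exp (-x)) :=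
            mul_le_mul_of_nonneg_left hfy hy.le
      _ = M * (y * Real.exp (-x)) := by ring
      _ ≤ M * b := by
          apply mul_le_mul_of_nonneg_left _ hM0.le
          rw [Real.exp_neg]
          rw [← div_eq_mul_inv, div_le_iff₀ (Real.exp_pos _)]
          linarith [hbex]
      _ = y₀ * β * M := by rw [hb_def]; ring

  · -- integrability of log² e^{-ψ}
    have hcont : ContinuousOn (fun y => (Real.log y)^2 * Real.exp (-ψ y)) (Ioi 0) := by
      apply ContinuousOn.mul
      · exact (Real.continuousOn_log.mono
          (fun x hx => (mem_compl_singleton_iff).2 (ne_of_gt hx))).pow 2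
      · exact Real.continuous_exp.comp_continuousOn hψc.neg
    have hmid : IntegrableOn (fun y => (Real.log y)^2 * Real.exp (-ψ y)) (Icc a b) :=
      (hcont.mono (fun x hx => mem_Ioi.2 (lt_of_lt_of_le ha0 hx.1))).integrableOn_compact
        isCompact_Icc
    -- left piece
    set k : ℝ := y₀^2/2 with hk_def
    have hk0 : 0 < k := by positivity
    set C₀ : ℝ := Real.exp (-ψ a + β*y₀^2/2 * a⁻¹^2) with hC0_def
    have hC00 : 0 < C₀ := Real.exp_pos _
    have hleft : IntegrableOn (fun y => (Real.log y)^2 * Real.exp (-ψ y)) (Ioc 0 a) := by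
      apply Integrable.mono' (g := fun _ => C₀ * (2/k + 2*a^2))
        (integrableOn_const measure_Ioc_lt_top.ne)
        ((hcont.mono (fun x hx => mem_Ioi.2 hx.1)).aestronglyMeasurable measurableSet_Ioc)
      rw [ae_restrict_iff' measurableSet_Ioc]
      filter_upwards with y hy
      obtain ⟨hy0', hya⟩ := hy
      have hfy : Real.exp (-ψ y) ≤ C₀ * Real.exp (-(k * y⁻¹^2)) := by
        rw [hC0_def, ← Real.exp_add]
        apply Real.exp_le_exp.2
        have hcL := hL y hy0' hya
        have hβk : k * y⁻¹^2 ≤ β*y₀^2/2 * y⁻¹^2 := by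
          apply mul_le_mul_of_nonneg_right _ (by positivity)
          rw [hk_def]
          nlinarith [mul_nonneg (mul_nonneg hy₀.le hy₀.le) (sub_nonneg.2 hβ)]
        have hexpand : β*y₀^2/2 * (y⁻¹^2 - a⁻¹^2)
            = β*y₀^2/2 * y⁻¹^2 - β*y₀^2/2 * a⁻¹^2 := by ring
        linarith
      have hlog : |Real.log y| ≤ y⁻¹ + a := by
        rcases le_total y 1 with h1' | h1'
        · have : Real.log y ≤ 0 := Real.log_nonpos hy0'.le h1'
          rw [abs_of_nonpos this, ← Real.log_inv]
          have hyi : (1:ℝ) ≤ y⁻¹ := (one_le_inv_iff₀).2 ⟨hy0', h1'⟩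
          have := Real.log_le_sub_one_of_pos (show (0:ℝ) < y⁻¹ by positivity)
          linarith
        · rw [abs_of_nonneg (Real.log_nonneg h1')]
          have := Real.log_le_sub_one_of_pos hy0'
          have : Real.log y ≤ y - 1 := this
          have hyi : 0 < y⁻¹ := by positivity
          linarith
      have hlog2 : (Real.log y)^2 ≤ 2*y⁻¹^2 + 2*a^2 := by
        have h1' : (Real.log y)^2 ≤ (y⁻¹ + a)^2 := by
          rw [← sq_abs (Real.log y)]
          apply pow_le_pow_left₀ (abs_nonneg _) hlog
        nlinarith [sq_nonneg (y⁻¹ - a)]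
      have hte : k * y⁻¹^2 * Real.exp (-(k * y⁻¹^2)) ≤ 1 := by
        have ht : k * y⁻¹^2 ≤ Real.exp (k * y⁻¹^2) := by
          have := Real.add_one_le_exp (k * y⁻¹^2)
          linarith
        rw [Real.exp_neg]
        rw [← div_eq_mul_inv, div_le_one (Real.exp_pos _)]
        exact ht
      have he1 : Real.exp (-(k * y⁻¹^2)) ≤ 1 := Real.exp_le_one_iff.2 (neg_nonpos.2 (by positivity))
      have hnn : 0 ≤ (Real.log y)^2 * Real.exp (-ψ y) := by positivity
      rw [Real.norm_eq_abs, abs_of_nonneg hnn]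
      calc (Real.log y)^2 * Real.exp (-ψ y)
          ≤ (2*y⁻¹^2 + 2*a^2) * (C₀ * Real.exp (-(k * y⁻¹^2))) := by
            apply mul_le_mul hlog2 hfy (Real.exp_pos _).le (by positivity)
      _ = C₀ * (2/k * (k * y⁻¹^2 * Real.exp (-(k * y⁻¹^2))) + 2*a^2 * Real.exp (-(k * y⁻¹^2))) := by
            field_simp
      _ ≤ C₀ * (2/k * 1 + 2*a^2 * 1) := by
            apply mul_le_mul_of_nonneg_left _ hC00.le
            have h2k : (0:ℝ) ≤ 2/k := by positivity
            have ha2 : (0:ℝ) ≤ 2*a^2 := by positivity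
            have := mul_le_mul_of_nonneg_left hte h2k
            have := mul_le_mul_of_nonneg_left he1 ha2
            linarith
      _ = C₀ * (2/k + 2*a^2) := by ring
    -- right piece
    set c2 : ℝ := 1/(2*y₀^2) with hc2_def
    have hc20 : 0 < c2 := by positivity
    set C₁ : ℝ := Real.exp (-ψ b + b^2/(2*y₀^2)) with hC1_def
    have hC10 : 0 < C₁ := Real.exp_pos _
    have hBint : Integrable (fun y : ℝ =>
        2*C₁ * (y^(2:ℕ) * Real.exp (-c2 * y^2)) + 2*C₁*b⁻¹^2 * Real.exp (-c2 * y^2)) := by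
      apply Integrable.add
      · apply Integrable.const_mul
        exact (integrable_rpow_mul_exp_neg_mul_sq hc20 (s := 2) (by norm_num)).congr
          (Filter.Eventually.of_forall (fun x => by simp [Real.rpow_natCast]))
      · exact (integrable_exp_neg_mul_sq hc20).const_mul _
    have hright : IntegrableOn (fun y => (Real.log y)^2 * Real.exp (-ψ y)) (Ici b) := by
      apply Integrable.mono' (g := fun y => 2*C₁ * (y^(2:ℕ) * Real.exp (-c2 * y^2))
          + 2*C₁*b⁻¹^2 * Real.exp (-c2 * y^2)) hBint.integrableOn
        ((hcont.mono (fun x hx => mem_Ioi.2 (lt_of_lt_of_le hb0 hx))).aestronglyMeasurable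
          measurableSet_Ici)
      filter_upwards [self_mem_ae_restrict measurableSet_Ici] with y hy
      have hyb : b ≤ y := hy
      have hy0' : 0 < y := lt_of_lt_of_le hb0 hyb
      have hfy : Real.exp (-ψ y) ≤ C₁ * Real.exp (-c2 * y^2) := by
        rw [hC1_def, ← Real.exp_add]
        apply Real.exp_le_exp.2
        have hRy := hR y hyb
        have hyb2 : b^2 ≤ y^2 := by nlinarith [hyb, hb0]
        have hmono' : (y^2 - b^2)/(2*y₀^2) ≤ β * (y^2 - b^2)/(2*y₀^2) := by
          have hxx : 0 ≤ (y^2 - b^2)/(2*y₀^2) :=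
            div_nonneg (by linarith) (by positivity)
          have heqx : β * (y^2 - b^2)/(2*y₀^2) = β * ((y^2 - b^2)/(2*y₀^2)) := by ring
          nlinarith [hxx, hβ]
        have hc2y : -c2 * y^2 = -(y^2/(2*y₀^2)) := by rw [hc2_def]; ring
        rw [hc2y]
        have hsplit : (y^2 - b^2)/(2*y₀^2) = y^2/(2*y₀^2) - b^2/(2*y₀^2) := by ring
        linarith
      have hlog : |Real.log y| ≤ y + b⁻¹ := by
        rcases le_total y 1 with h1' | h1'
        · have hneg : Real.log y ≤ 0 := Real.log_nonpos hy0'.le h1'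
          rw [abs_of_nonpos hneg, ← Real.log_inv]
          have := Real.log_le_sub_one_of_pos (show (0:ℝ) < y⁻¹ by positivity)
          have hib : y⁻¹ ≤ b⁻¹ := by
            apply inv_anti₀ hb0 hyb
          linarith
        · rw [abs_of_nonneg (Real.log_nonneg h1')]
          have := Real.log_le_sub_one_of_pos hy0'
          have hib : 0 < b⁻¹ := by positivity
          linarith
      have hlog2 : (Real.log y)^2 ≤ 2*y^2 + 2*b⁻¹^2 := by
        have h1' : (Real.log y)^2 ≤ (y + b⁻¹)^2 := by
          rw [← sq_abs (Real.log y)]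
          apply pow_le_pow_left₀ (abs_nonneg _) hlog
        nlinarith [sq_nonneg (y - b⁻¹)]
      have hnn : 0 ≤ (Real.log y)^2 * Real.exp (-ψ y) := by positivity
      rw [Real.norm_eq_abs, abs_of_nonneg hnn]
      calc (Real.log y)^2 * Real.exp (-ψ y)
          ≤ (2*y^2 + 2*b⁻¹^2) * (C₁ * Real.exp (-c2 * y^2)) :=
            mul_le_mul hlog2 hfy (Real.exp_pos _).le (by positivity)
      _ = 2*C₁ * (y^(2:ℕ) * Real.exp (-c2 * y^2)) + 2*C₁*b⁻¹^2 * Real.exp (-c2 * y^2) := by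
            ring
    -- combine
    have hcover : Ioi (0:ℝ) ⊆ Ioc 0 a ∪ (Icc a b ∪ Ici b) := by
      intro y hy
      rcases le_total y a with h | h
      · exact Or.inl ⟨hy, h⟩
      · rcases le_total y b with h' | h'
        · exact Or.inr (Or.inl ⟨h, h'⟩)
        · exact Or.inr (Or.inr h')
    exact IntegrableOn.mono_set (hleft.union (hmid.union hright)) hcover




/-- Logarithmic variance lower bound (Lemma 3.4 of the paper): if `Y > 0` has continuous
density `e^{-ψ}` on `(0,∞)` with `ψ` twice continuously differentiable, and there are
`y₀ > 0`, `α ≥ 1`, `β ≥ 1` such that `y₀ ψ'(y₀ y) ≥ β y` for `y ≥ β`,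
`y₀ ψ'(y₀ y) ≤ -β y⁻³` for `0 < y ≤ β⁻¹`, and `|y₀² ψ''(y₀ y)| ≤ α (1 + y⁻⁴)` for `y > 0`,
then `Var(log Y) ≥ c α⁻¹ β⁻⁶` for a universal constant `c > 0`. -/
theorem stmt_0 :
    ∃ c : ℝ, 0 < c ∧
      ∀ (Ω : Type) (_ : MeasurableSpace Ω) (μ : Measure Ω) (_ : IsProbabilityMeasure μ)
        (Y : Ω → ℝ) (ψ : ℝ → ℝ) (y₀ α β : ℝ),
        Measurable Y → (∀ ω, 0 < Y ω) →
        ContDiffOn ℝ 2 ψ (Ioi 0) →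
        (∀ s : Set ℝ, MeasurableSet s →
          (μ (Y ⁻¹' s)).toReal = ∫ y in s ∩ Ioi 0, Real.exp (-ψ y)) →
        0 < y₀ → 1 ≤ α → 1 ≤ β →
        (∀ y : ℝ, β ≤ y → β * y ≤ y₀ * deriv ψ (y₀ * y)) →
        (∀ y : ℝ, 0 < y → y ≤ β⁻¹ → y₀ * deriv ψ (y₀ * y) ≤ -(β * y⁻¹ ^ 3)) →
        (∀ y : ℝ, 0 < y → |y₀ ^ 2 * deriv (deriv ψ) (y₀ * y)| ≤ α * (1 + y⁻¹ ^ 4)) →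
        c * α⁻¹ * β⁻¹ ^ 6 ≤ variance (fun ω => Real.log (Y ω)) μ := by
  refine ⟨(64:ℝ)⁻¹, by norm_num, ?_⟩
  intro Ω mΩ μ hprob Y ψ y₀ α β hY hYpos hψ hdens hy₀ hα hβ h1 h2 h3
  have hα0 : 0 < α := lt_of_lt_of_le one_pos hα
  have hβ0 : 0 < β := lt_of_lt_of_le one_pos hβ
  -- total mass and integrability
  have hTot : ∫ y in Ioi (0:ℝ), Real.exp (-ψ y) = 1 := by
    have h := hdens univ MeasurableSet.univ
    rw [Set.preimage_univ, measure_univ, Set.univ_inter] at h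
    simpa using h.symm
  have hInt : IntegrableOn (fun y => Real.exp (-ψ y)) (Ioi 0) := by
    by_contra h
    rw [MeasureTheory.integral_undef h] at hTot
    norm_num at hTot
  obtain ⟨D, hD0, hD2, hDbd, hIntLog⟩ := var_core ψ y₀ α β hψ hy₀ hα hβ h1 h2 h3 hInt hTot
  set X : Ω → ℝ := fun ω => Real.log (Y ω) with hX_def
  have hXm : Measurable X := Real.measurable_log.comp hY
  -- the pushforward measure
  have hfc : ContinuousOn (fun y => Real.exp (-ψ y)) (Ioi 0) :=
    Real.continuous_exp.comp_continuousOn hψ.continuousOn.neg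
  have hψae : AEMeasurable (fun y => ENNReal.ofReal (Real.exp (-ψ y)))
      (volume.restrict (Ioi 0)) :=
    ENNReal.measurable_ofReal.comp_aemeasurable (hfc.aemeasurable measurableSet_Ioi)
  set fm : ℝ → ℝ≥0∞ := hψae.mk _ with hfm_def
  have hfm_meas : Measurable fm := hψae.measurable_mk
  have hfm_ae : (fun y => ENNReal.ofReal (Real.exp (-ψ y)))
      =ᵐ[volume.restrict (Ioi 0)] fm := hψae.ae_eq_mk
  have hmap : Measure.map Y μ = (volume.restrict (Ioi 0)).withDensity fm := by
    ext s hs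
    rw [Measure.map_apply hY hs, withDensity_apply _ hs]
    calc μ (Y ⁻¹' s) = ENNReal.ofReal ((μ (Y ⁻¹' s)).toReal) :=
          (ENNReal.ofReal_toReal (measure_ne_top μ _)).symm
    _ = ENNReal.ofReal (∫ y in s ∩ Ioi 0, Real.exp (-ψ y)) := by rw [hdens s hs]
    _ = ∫⁻ y in s ∩ Ioi 0, ENNReal.ofReal (Real.exp (-ψ y)) :=
          ofReal_integral_eq_lintegral_ofReal (hInt.mono_set inter_subset_right)
            (Filter.Eventually.of_forall (fun y => (Real.exp_pos _).le))
    _ = ∫⁻ y in s, ENNReal.ofReal (Real.exp (-ψ y)) ∂(volume.restrict (Ioi 0)) := by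
          rw [Measure.restrict_restrict hs]
    _ = ∫⁻ y in s, fm y ∂(volume.restrict (Ioi 0)) :=
          lintegral_congr_ae (hfm_ae.filter_mono (ae_mono Measure.restrict_le_self))
  -- square integrability of X
  have hInt2 : Integrable (fun ω => (X ω)^2) μ := by
    have h1' : Integrable (fun y => (Real.log y)^2) (Measure.map Y μ) := by
      rw [hmap, integrable_withDensity_iff hfm_meas
        (by filter_upwards [hfm_ae] with y hy
            rw [← hy]; exact ENNReal.ofReal_lt_top)]
      apply hIntLog.congr
      filter_upwards [hfm_ae] with y hy
      rw [← hy, ENNReal.toReal_ofReal (Real.exp_pos _).le]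
    exact (integrable_map_measure ((Real.measurable_log.pow_const 2).aestronglyMeasurable)
      hY.aemeasurable).1 h1'
  have hMem : MemLp X 2 μ :=
    (memLp_two_iff_integrable_sq hXm.aestronglyMeasurable).2 hInt2
  -- variance as an integral
  set m : ℝ := ∫ ω, X ω ∂μ with hm_def
  have hvar : variance X μ = ∫ ω, (X ω - m)^2 ∂μ := by
    rw [variance_eq_integral hXm.aemeasurable]
  set T : ℝ := 1/(4*D) with hT_def
  have hT0 : 0 < T := by positivity
  set l : ℝ := Real.exp (m - T) with hl_def
  set r : ℝ := Real.exp (m + T) with hr_def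
  have hlr : l ≤ r := Real.exp_le_exp.2 (by linarith)
  set A : Set Ω := Y ⁻¹' (Icc l r) with hA_def
  have hA : MeasurableSet A := hY measurableSet_Icc
  -- the measure of A is at most 1/2
  have hAbd : (μ A).toReal ≤ 1/2 := by
    have h := hdens (Icc l r) measurableSet_Icc
    have hIccsub : Icc l r ∩ Ioi 0 = Icc l r :=
      inter_eq_left.2 (fun x hx => mem_Ioi.2 (lt_of_lt_of_le (Real.exp_pos _) hx.1))
    rw [hIccsub] at h
    rw [hA_def, h]
    have hfb : ∀ y ∈ Icc l r, Real.exp (-ψ y) ≤ D * y⁻¹ := by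
      intro y hy
      have hy0 : 0 < y := lt_of_lt_of_le (Real.exp_pos _) hy.1
      have hyD := hDbd y hy0
      rw [show D * y⁻¹ = D / y by ring, le_div_iff₀ hy0]
      linarith [mul_comm y (Real.exp (-ψ y)), mul_comm (Real.exp (-ψ y)) y]
    have hIinv : IntegrableOn (fun y => D * y⁻¹) (Icc l r) := by
      apply ContinuousOn.integrableOn_compact isCompact_Icc
      exact continuousOn_const.mul (continuousOn_inv₀.mono
        (fun x hx => (mem_compl_singleton_iff).2
          (ne_of_gt (lt_of_lt_of_le (Real.exp_pos _) hx.1))))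
    have hle1 : ∫ y in Icc l r, Real.exp (-ψ y) ≤ ∫ y in Icc l r, D * y⁻¹ :=
      setIntegral_mono_on
        (hInt.mono_set (fun x hx => mem_Ioi.2 (lt_of_lt_of_le (Real.exp_pos _) hx.1)))
        hIinv measurableSet_Icc hfb
    have hcal : ∫ y in Icc l r, D * y⁻¹ = D * (2*T) := by
      have e1 : ∫ y in Icc l r, D * y⁻¹ = ∫ y in Ioc l r, D * y⁻¹ :=
        MeasureTheory.integral_Icc_eq_integral_Ioc
      have e2 : ∫ y in Ioc l r, D * y⁻¹ = ∫ y in l..r, D * y⁻¹ :=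
        (intervalIntegral.integral_of_le hlr).symm
      have e3 : ∫ y in l..r, D * y⁻¹ = D * ∫ y in l..r, y⁻¹ :=
        intervalIntegral.integral_const_mul _ _
      have e4 : ∫ y in (l:ℝ)..r, y⁻¹ = Real.log (r / l) :=
        integral_inv_of_pos (Real.exp_pos _) (Real.exp_pos _)
      have e5 : Real.log (r / l) = 2*T := by
        rw [hl_def, hr_def, ← Real.exp_sub, Real.log_exp]
        ring
      rw [e1, e2, e3, e4, e5]
    have hDT : D * (2*T) = 1/2 := by
      rw [hT_def]
      field_simp
      ring
    linarith
  -- lower bound for integral over the complement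
  have hScompl : (μ Aᶜ).toReal = 1 - (μ A).toReal := by
    rw [measure_compl hA (measure_ne_top μ A), measure_univ,
      ENNReal.toReal_sub_of_le prob_le_one ENNReal.one_ne_top, ENNReal.toReal_one]
  have hS12 : 1/2 ≤ (μ Aᶜ).toReal := by rw [hScompl]; linarith
  have hqInt : Integrable (fun ω => (X ω - m)^2) μ := (hMem.sub (memLp_const m)).integrable_sq
  have hptw : ∀ ω ∈ Aᶜ, T^2 ≤ (X ω - m)^2 := by
    intro ω hω
    rw [hA_def, mem_compl_iff, mem_preimage, mem_Icc, not_and_or] at hω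
    rcases hω with hω | hω
    · push_neg at hω
      have : Real.log (Y ω) < Real.log l := Real.log_lt_log (hYpos ω) hω
      rw [hl_def, Real.log_exp] at this
      have hXω : X ω - m < -T := by rw [hX_def]; simp only; linarith
      nlinarith [hXω, hT0]
    · push_neg at hω
      have : Real.log r < Real.log (Y ω) := Real.log_lt_log (Real.exp_pos _) hω
      rw [hr_def, Real.log_exp] at this
      have hXω : T < X ω - m := by rw [hX_def]; simp only; linarith
      nlinarith [hXω, hT0]
  have step2 : T^2 * (μ Aᶜ).toReal ≤ ∫ ω in Aᶜ, (X ω - m)^2 ∂μ := by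
    have hconst : ∫ _ω in Aᶜ, (T^2 : ℝ) ∂μ = (μ Aᶜ).toReal * T^2 := by
      rw [setIntegral_const, smul_eq_mul, Measure.real]
    calc T^2 * (μ Aᶜ).toReal = ∫ _ω in Aᶜ, (T^2 : ℝ) ∂μ := by rw [hconst]; ring
    _ ≤ ∫ ω in Aᶜ, (X ω - m)^2 ∂μ :=
        setIntegral_mono_on (integrableOn_const (measure_ne_top μ _))
          hqInt.integrableOn hA.compl hptw
  have step1 : ∫ ω in Aᶜ, (X ω - m)^2 ∂μ ≤ ∫ ω, (X ω - m)^2 ∂μ :=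
    setIntegral_le_integral hqInt (Filter.Eventually.of_forall (fun ω => sq_nonneg _))
  -- final computation
  have hDlb : (64:ℝ)⁻¹ * α⁻¹ * β⁻¹ ^ 6 ≤ T^2 * (1/2) := by
    have hT2 : T^2 = 1/(16*D^2) := by rw [hT_def]; field_simp; ring
    rw [hT2]
    have hβ6 : β⁻¹ ^ 6 = (β^6)⁻¹ := by rw [← inv_pow]
    rw [hβ6]
    have hq : (64:ℝ)⁻¹ * α⁻¹ * (β^6)⁻¹ = 1/(64 * α * β^6) := by
      field_simp
    rw [hq]
    have h32 : 32 * D^2 ≤ 64 * α * β^6 := by nlinarith [hD2]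
    have hpos1 : (0:ℝ) < 32 * D^2 := by positivity
    calc 1/(64 * α * β^6) ≤ 1/(32 * D^2) := by
          apply one_div_le_one_div_of_le hpos1 h32
    _ = 1/(16*D^2) * (1/2) := by ring
  calc (64:ℝ)⁻¹ * α⁻¹ * β⁻¹ ^ 6 ≤ T^2 * (1/2) := hDlb
  _ ≤ T^2 * (μ Aᶜ).toReal := by
      apply mul_le_mul_of_nonneg_left hS12 (sq_nonneg T)
  _ ≤ ∫ ω in Aᶜ, (X ω - m)^2 ∂μ := step2
  _ ≤ ∫ ω, (X ω - m)^2 ∂μ := step1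
  _ = variance X μ := hvar.symm
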